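/- (Commutation of the Heun operator with the finite Fourier transform) Let c > 0 and let ψ : ℝ → ℂ be twice continuously differentiable on a neighborhood of [−1, 1]. Let G(x) = ∫_{−1}^{1} e^{icxt} ψ(t) dt. Then G is twice differentiable on ℝ and for every x ∈ ℝ, (1−x²) G''(x) − 2x G'(x) − c²x² G(x) = ∫_{−1}^{1} e^{icxt} [ (1−t²) ψ''(t) − 2t ψ'(t) − c²t² ψ(t) ] dt. That is, T ∘ F_c = F_c ∘ T on twice continuously differentiable functions, where T is the confluent Heun operator. -/

import Mathlib

open Set Complex intervalIntegral MeasureTheory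
open scoped Interval

lemma norm_cexp_I_mul' (c x t : ℝ) : ‖Complex.exp (Complex.I * c * x * t)‖ = 1 := by
  have : Complex.I * c * x * t = ((c*x*t : ℝ) : ℂ) * Complex.I := by push_cast; ring
  rw [this]
  simpa using Complex.norm_exp_ofReal_mul_I (c*x*t)

lemma aux_deriv (c : ℝ) (φ : ℝ → ℂ) (hφ : ContinuousOn φ (Icc (-1:ℝ) 1)) (x₀ : ℝ) :
    HasDerivAt (fun x : ℝ => ∫ t in (-1:ℝ)..1, Complex.exp (Complex.I * c * x * t) * φ t)
      (∫ t in (-1:ℝ)..1, Complex.exp (Complex.I * c * x₀ * t) * (Complex.I * c * t * φ t)) x₀ := by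
  have hIoc : Ι (-1:ℝ) 1 = Ioc (-1:ℝ) 1 := uIoc_of_le (by norm_num)
  set F : ℝ → ℝ → ℂ := fun x t => Complex.exp (Complex.I * c * x * t) * φ t with hF
  set F' : ℝ → ℝ → ℂ := fun x t => Complex.exp (Complex.I * c * x * t) * (Complex.I * c * t * φ t)
    with hF'
  have hcontF : ∀ x : ℝ, ContinuousOn (F x) (Icc (-1:ℝ) 1) := fun x =>
    (Complex.continuous_exp.comp (by fun_prop)).continuousOn.mul hφ
  have hcontF' : ∀ x : ℝ, ContinuousOn (F' x) (Icc (-1:ℝ) 1) := fun x =>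
    (Complex.continuous_exp.comp (by fun_prop)).continuousOn.mul
      ((by fun_prop : Continuous fun t : ℝ => Complex.I * c * (t:ℂ)).continuousOn.mul hφ)
  have hmeas : ∀ᶠ x in nhds x₀, AEStronglyMeasurable (F x)
      ((MeasureTheory.volume : Measure ℝ).restrict (Ι (-1:ℝ) 1)) :=
    Filter.Eventually.of_forall fun x =>
      ((hcontF x).mono (by rw [hIoc]; exact Ioc_subset_Icc_self)).aestronglyMeasurable
        (by rw [hIoc]; exact measurableSet_Ioc)
  have hint : IntervalIntegrable (F x₀) MeasureTheory.volume (-1:ℝ) 1 := by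
    rw [intervalIntegrable_iff_integrableOn_Icc_of_le (by norm_num)]
    exact (hcontF x₀).integrableOn_compact isCompact_Icc
  have hmeas' : AEStronglyMeasurable (F' x₀)
      ((MeasureTheory.volume : Measure ℝ).restrict (Ι (-1:ℝ) 1)) :=
    ((hcontF' x₀).mono (by rw [hIoc]; exact Ioc_subset_Icc_self)).aestronglyMeasurable
      (by rw [hIoc]; exact measurableSet_Ioc)
  have hbound : ∀ᵐ t ∂(MeasureTheory.volume : Measure ℝ), t ∈ Ι (-1:ℝ) 1 →
      ∀ x ∈ Metric.ball x₀ 1, ‖F' x t‖ ≤ |c| * ‖φ t‖ :=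
    Filter.Eventually.of_forall fun t ht x _ => by
      rw [hIoc] at ht
      have ht1 : |t| ≤ 1 := abs_le.2 ⟨ht.1.le, ht.2⟩
      calc ‖F' x t‖ = ‖(Complex.I * c * t * φ t : ℂ)‖ := by
            rw [hF']; simp only []; rw [norm_mul, norm_cexp_I_mul', one_mul]
        _ = |c| * |t| * ‖φ t‖ := by
            simp [norm_mul, Complex.norm_real, Real.norm_eq_abs]
        _ ≤ |c| * 1 * ‖φ t‖ := by gcongr
        _ = |c| * ‖φ t‖ := by ring
  have hbint : IntervalIntegrable (fun t => |c| * ‖φ t‖) MeasureTheory.volume (-1:ℝ) 1 := by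
    rw [intervalIntegrable_iff_integrableOn_Icc_of_le (by norm_num)]
    exact (continuousOn_const.mul hφ.norm).integrableOn_compact isCompact_Icc
  have hdiff : ∀ᵐ t ∂(MeasureTheory.volume : Measure ℝ), t ∈ Ι (-1:ℝ) 1 →
      ∀ x ∈ Metric.ball x₀ 1, HasDerivAt (fun x => F x t) (F' x t) x :=
    Filter.Eventually.of_forall fun t ht x _ => by
      have h1 : HasDerivAt (fun x : ℝ => Complex.I * c * x * t) (Complex.I * c * t) x := by
        have := ((Complex.ofRealCLM.hasDerivAt (x := x)).const_mul (Complex.I * c)).mul_const (t:ℂ)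
        simpa using this
      have h2 := (h1.cexp).mul_const (φ t)
      convert h2 using 1
      · rfl
      simp only [hF']
      ring
  exact (intervalIntegral.hasDerivAt_integral_of_dominated_loc_of_deriv_le (Metric.ball_mem_nhds x₀ one_pos)
    hmeas hint hmeas' hbound hbint hdiff).2

/-- commutation of the Heun operator with the finite Fourier transform:
for `ψ` twice continuously differentiable on a neighborhood of `[−1,1]` and
`G = F_c[ψ]`, the function `G` is twice differentiable and `T G = F_c[T ψ]`, where `T` is
the confluent Heun operator `(T g)(x) = (1−x²)g''(x) − 2x g'(x) − c²x² g(x)`. -/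
theorem stmt13 (c : ℝ) (hc : 0 < c)
    (ψ : ℝ → ℂ) (U : Set ℝ) (hU : IsOpen U) (hsub : Icc (-1 : ℝ) 1 ⊆ U)
    (hψ : ContDiffOn ℝ 2 ψ U)
    (G : ℝ → ℂ)
    (hG : ∀ x : ℝ, G x = ∫ t in (-1 : ℝ)..1, Complex.exp (Complex.I * c * x * t) * ψ t) :
    ∀ x : ℝ,
      DifferentiableAt ℝ G x ∧ DifferentiableAt ℝ (deriv G) x ∧
      (1 - (x : ℂ) ^ 2) * deriv (deriv G) x - 2 * (x : ℂ) * deriv G x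
          - (c : ℂ) ^ 2 * (x : ℂ) ^ 2 * G x
        = ∫ t in (-1 : ℝ)..1, Complex.exp (Complex.I * c * x * t) *
            ((1 - (t : ℂ) ^ 2) * iteratedDeriv 2 ψ t - 2 * (t : ℂ) * deriv ψ t
              - (c : ℂ) ^ 2 * (t : ℂ) ^ 2 * ψ t) := by
  have hit2 : iteratedDeriv 2 ψ = deriv (deriv ψ) := by
    rw [iteratedDeriv_succ, iteratedDeriv_one]
  have hIcc : uIcc (-1:ℝ) 1 = Icc (-1:ℝ) 1 := uIcc_of_le (by norm_num)
  -- continuity facts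
  have hψc : ContinuousOn ψ (Icc (-1:ℝ) 1) := (hψ.continuousOn).mono hsub
  have hψ'cd : ContDiffOn ℝ 1 (deriv ψ) U := hψ.deriv_of_isOpen hU (by norm_num)
  have hψ'c : ContinuousOn (deriv ψ) (Icc (-1:ℝ) 1) := hψ'cd.continuousOn.mono hsub
  have hψ''c : ContinuousOn (deriv (deriv ψ)) (Icc (-1:ℝ) 1) :=
    (hψ'cd.continuousOn_deriv_of_isOpen hU le_rfl).mono hsub
  have hd1 : ∀ t ∈ U, HasDerivAt ψ (deriv ψ t) t := fun t ht =>
    ((hψ.differentiableOn (by norm_num) t ht).differentiableAt (hU.mem_nhds ht)).hasDerivAt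
  have hd2 : ∀ t ∈ U, HasDerivAt (deriv ψ) (deriv (deriv ψ) t) t := fun t ht =>
    ((hψ'cd.differentiableOn one_ne_zero t ht).differentiableAt (hU.mem_nhds ht)).hasDerivAt
  have hGfun : G = fun x : ℝ => ∫ t in (-1:ℝ)..1, Complex.exp (Complex.I * c * x * t) * ψ t :=
    funext hG
  -- first derivative
  have hG1 : ∀ x : ℝ, HasDerivAt G
      (∫ t in (-1:ℝ)..1, Complex.exp (Complex.I * c * x * t) * (Complex.I * c * t * ψ t)) x := by
    intro x
    rw [hGfun]
    exact aux_deriv c ψ hψc x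
  have hdG : deriv G = fun x : ℝ =>
      ∫ t in (-1:ℝ)..1, Complex.exp (Complex.I * c * x * t) * (Complex.I * c * t * ψ t) :=
    funext fun x => (hG1 x).deriv
  have hφ1c : ContinuousOn (fun t : ℝ => Complex.I * c * t * ψ t) (Icc (-1:ℝ) 1) :=
    ((by fun_prop : Continuous fun t : ℝ => Complex.I * c * (t:ℂ)).continuousOn).mul hψc
  have hG2 : ∀ x : ℝ, HasDerivAt (deriv G)
      (∫ t in (-1:ℝ)..1, Complex.exp (Complex.I * c * x * t) *
        (Complex.I * c * t * (Complex.I * c * t * ψ t))) x := by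
    intro x
    rw [hdG]
    exact aux_deriv c (fun t => Complex.I * c * t * ψ t) hφ1c x
  intro x
  refine ⟨(hG1 x).differentiableAt, (hG2 x).differentiableAt, ?_⟩
  -- integration by parts
  set H : ℝ → ℂ := fun t => Complex.exp (Complex.I * c * x * t) *
    ((1 - (t:ℂ)^2) * deriv ψ t - Complex.I * c * x * (1 - (t:ℂ)^2) * ψ t) with hH
  set H' : ℝ → ℂ := fun t => Complex.exp (Complex.I * c * x * t) *
    ((1 - (t:ℂ)^2) * deriv (deriv ψ) t - 2 * t * deriv ψ t +
      ((c:ℂ)^2 * (x:ℂ)^2 * (1 - (t:ℂ)^2) + 2 * Complex.I * c * x * t) * ψ t) with hH'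
  have hEc : Continuous (fun t : ℝ => Complex.exp (Complex.I * c * x * t)) :=
    Complex.continuous_exp.comp (by fun_prop)
  have hHd : ∀ t ∈ uIcc (-1:ℝ) 1, HasDerivAt H (H' t) t := by
    intro t ht
    rw [hIcc] at ht
    have htU : t ∈ U := hsub ht
    have hE : HasDerivAt (fun t:ℝ => Complex.exp (Complex.I * c * x * t))
        (Complex.exp (Complex.I * c * x * t) * (Complex.I * c * x)) t := by
      have h1 : HasDerivAt (fun t:ℝ => Complex.I * c * x * t) (Complex.I * c * x) t := by
        simpa using (Complex.ofRealCLM.hasDerivAt (x := t)).const_mul (Complex.I * c * x)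
      exact h1.cexp
    have h0 : HasDerivAt (fun s:ℝ => ((s:ℂ))) 1 t := by
      simpa using (hasDerivAt_id t).ofReal_comp
    have hP : HasDerivAt (fun t:ℝ => (1:ℂ) - (t:ℂ)^2) (-(2*(t:ℂ))) t := by
      have h := (h0.mul h0).const_sub 1
      have he : (fun s:ℝ => (1:ℂ) - (s:ℂ)*(s:ℂ)) = fun s:ℝ => (1:ℂ) - (s:ℂ)^2 := by
        ext s; ring
      simp only [Pi.mul_apply] at h
      rw [he] at h
      convert h using 1
      · rfl
      ring
    have hcomb := hE.mul (((hP.mul (hd2 t htU)).sub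
      (((hP.mul (hd1 t htU)).const_mul (Complex.I * c * x)))))
    simp only [Pi.mul_def, Pi.sub_def] at hcomb
    convert hcomb using 1
    · rfl
    · ext s; rw [hH]; ring_nf
    · rw [hH']
      linear_combination (Complex.exp (Complex.I * c * x * t) * (c:ℂ)^2 * (x:ℂ)^2 *
        (1 - (t:ℂ)^2) * ψ t) * Complex.I_sq
  have hH'c : ContinuousOn H' (Icc (-1:ℝ) 1) := by
    rw [hH']
    refine hEc.continuousOn.mul (ContinuousOn.add (ContinuousOn.sub ?_ ?_) ?_)
    · exact (by fun_prop : Continuous fun t:ℝ => (1:ℂ)-(t:ℂ)^2).continuousOn.mul hψ''c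
    · exact (by fun_prop : Continuous fun t:ℝ => 2*(t:ℂ)).continuousOn.mul hψ'c
    · exact (by fun_prop : Continuous fun t:ℝ =>
        (c:ℂ)^2*(x:ℂ)^2*(1-(t:ℂ)^2)+2*Complex.I*c*x*t).continuousOn.mul hψc
  have hH'int : IntervalIntegrable H' MeasureTheory.volume (-1:ℝ) 1 := by
    apply ContinuousOn.intervalIntegrable; rwa [hIcc]
  have hibp : (∫ t in (-1:ℝ)..1, H' t) = 0 := by
    rw [intervalIntegral.integral_eq_sub_of_hasDerivAt hHd hH'int, hH]
    norm_num
  -- integrands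
  set A : ℝ → ℂ := fun t => Complex.exp (Complex.I * c * x * t) *
    (Complex.I * c * t * (Complex.I * c * t * ψ t)) with hA
  set B : ℝ → ℂ := fun t => Complex.exp (Complex.I * c * x * t) * (Complex.I * c * t * ψ t)
    with hB
  set C : ℝ → ℂ := fun t => Complex.exp (Complex.I * c * x * t) * ψ t with hC
  have hAc : ContinuousOn A (Icc (-1:ℝ) 1) := hEc.continuousOn.mul
    (((by fun_prop : Continuous fun t:ℝ => Complex.I * c * (t:ℂ)).continuousOn).mul hφ1c)
  have hBc : ContinuousOn B (Icc (-1:ℝ) 1) := hEc.continuousOn.mul hφ1c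
  have hCc : ContinuousOn C (Icc (-1:ℝ) 1) := hEc.continuousOn.mul hψc
  have hAint : IntervalIntegrable A MeasureTheory.volume (-1:ℝ) 1 := by
    apply ContinuousOn.intervalIntegrable; rwa [hIcc]
  have hBint : IntervalIntegrable B MeasureTheory.volume (-1:ℝ) 1 := by
    apply ContinuousOn.intervalIntegrable; rwa [hIcc]
  have hCint : IntervalIntegrable C MeasureTheory.volume (-1:ℝ) 1 := by
    apply ContinuousOn.intervalIntegrable; rwa [hIcc]
  have hd2G : deriv (deriv G) x = ∫ t in (-1:ℝ)..1, A t := (hG2 x).deriv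
  have hd1G : deriv G x = ∫ t in (-1:ℝ)..1, B t := (hG1 x).deriv
  rw [hit2, hd2G, hd1G, hG x]
  have hLint : IntervalIntegrable
      (fun t => (1-(x:ℂ)^2) * A t - 2*(x:ℂ) * B t - (c:ℂ)^2*(x:ℂ)^2 * C t)
      MeasureTheory.volume (-1:ℝ) 1 :=
    ((hAint.const_mul _).sub (hBint.const_mul _)).sub (hCint.const_mul _)
  have hsplit : ∀ t : ℝ, Complex.exp (Complex.I * c * x * t) *
      ((1 - (t:ℂ)^2) * deriv (deriv ψ) t - 2 * t * deriv ψ t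
        - (c:ℂ)^2 * (t:ℂ)^2 * ψ t)
      = ((1-(x:ℂ)^2) * A t - 2*(x:ℂ) * B t - (c:ℂ)^2*(x:ℂ)^2 * C t) + H' t := by
    intro t
    rw [hA, hB, hC, hH']
    linear_combination (Complex.exp (Complex.I * c * x * t) * ((c:ℂ)^2 * (t:ℂ)^2 *
      ((x:ℂ)^2 - 1)) * ψ t) * Complex.I_sq
  calc (1 - (x:ℂ)^2) * (∫ t in (-1:ℝ)..1, A t) - 2*(x:ℂ) * (∫ t in (-1:ℝ)..1, B t)
        - (c:ℂ)^2*(x:ℂ)^2 * (∫ t in (-1:ℝ)..1, C t)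
      = ∫ t in (-1:ℝ)..1,
          ((1-(x:ℂ)^2) * A t - 2*(x:ℂ) * B t - (c:ℂ)^2*(x:ℂ)^2 * C t) := by
        rw [intervalIntegral.integral_sub ((hAint.const_mul _).sub (hBint.const_mul _))
            (hCint.const_mul _),
          intervalIntegral.integral_sub (hAint.const_mul _) (hBint.const_mul _),
          intervalIntegral.integral_const_mul, intervalIntegral.integral_const_mul,
          intervalIntegral.integral_const_mul]
    _ = (∫ t in (-1:ℝ)..1,
          ((1-(x:ℂ)^2) * A t - 2*(x:ℂ) * B t - (c:ℂ)^2*(x:ℂ)^2 * C t)) +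
        ∫ t in (-1:ℝ)..1, H' t := by rw [hibp, add_zero]
    _ = ∫ t in (-1:ℝ)..1,
          (((1-(x:ℂ)^2) * A t - 2*(x:ℂ) * B t - (c:ℂ)^2*(x:ℂ)^2 * C t) + H' t) := by
        rw [intervalIntegral.integral_add hLint hH'int]
    _ = ∫ t in (-1:ℝ)..1, Complex.exp (Complex.I * c * x * t) *
          ((1 - (t:ℂ)^2) * deriv (deriv ψ) t - 2 * t * deriv ψ t
            - (c:ℂ)^2 * (t:ℂ)^2 * ψ t) :=
        (intervalIntegral.integral_congr fun t _ => (hsplit t)).symm
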